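/- Fix ε > 0, C ≥ 0, and a finite-dimensional real normed space E. Let A : [1,∞) → (continuous linear endomorphisms of E) and f, g : [1,∞) → E be continuous with ‖A(λ)‖ ≤ C λ⁻², ‖f(λ)‖ ≤ C λ⁻², and ‖g(λ)‖ ≤ C λ^(−1−ε) for all λ ≥ 1. For real numbers F and G, let y_{F,G} : [1,∞) → E denote the unique solution of y'(λ) = A(λ) y(λ) + F·f(λ) + G·g(λ) for all λ ≥ 1 with y(1) = 0. Then there exist functions b₁, b₂ : [1,∞) → E, depending only on A, f, g (and not on F, G), each bounded in norm by a constant depending only on C and ε and each converging to a limit in E as λ → ∞, such that y_{F,G}(λ) = F·b₁(λ) + G·b₂(λ) for all λ ≥ 1 and all F, G ∈ ℝ. -/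

import Mathlib

open Filter

section PenroseAux

open Set MeasureTheory

variable {E : Type} [NormedAddCommGroup E] [NormedSpace ℝ E] [FiniteDimensional ℝ E]

/-- Locally, near `1 ≤ t < T`, the sets `Icc 1 T` and `Ici 1` agree. -/
private lemma icc_eventuallyEq_ici {t T : ℝ} (h1 : 1 ≤ t) (h2 : t < T) :
    Icc (1:ℝ) T =ᶠ[nhds t] Ici (1:ℝ) := by
  filter_upwards [Iio_mem_nhds h2] with s hs
  simp only [eq_iff_iff, Set.mem_Icc, Set.mem_Ici]
  exact ⟨fun h => h.1, fun h => ⟨h, le_of_lt hs⟩⟩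

private lemma icc_eventuallyEq_ici' {t T : ℝ} (h2 : t < T) :
    Icc t T =ᶠ[nhds t] Ici t := by
  filter_upwards [Iio_mem_nhds h2] with s hs
  simp only [eq_iff_iff, Set.mem_Icc, Set.mem_Ici]
  exact ⟨fun h => h.1, fun h => ⟨h, le_of_lt hs⟩⟩

/-- From a derivative within `Icc 1 T` at an interior-from-the-right point, get a derivative
within `Ici t`. -/
private lemma hasDerivWithinAt_Ici_of_Icc {y : ℝ → E} {d : E} {t T : ℝ}
    (h1 : 1 ≤ t) (h2 : t < T)
    (hy : HasDerivWithinAt y d (Icc 1 T) t) : HasDerivWithinAt y d (Ici t) t := by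
  have h3 : Icc t T ⊆ Icc (1:ℝ) T := Icc_subset_Icc h1 le_rfl
  exact ((hy.mono h3).congr_set (icc_eventuallyEq_ici' h2))

private lemma hasDerivWithinAt_Ici_one_of_Icc {y : ℝ → E} {d : E} {t T : ℝ}
    (h1 : 1 ≤ t) (h2 : t < T)
    (hy : HasDerivWithinAt y d (Icc 1 T) t) : HasDerivWithinAt y d (Ici (1:ℝ)) t :=
  hy.congr_set (icc_eventuallyEq_ici h1 h2)

variable {C ε₀ : ℝ} {A : ℝ → E →L[ℝ] E} {h : ℝ → E}

/-- Fundamental theorem of calculus for solutions on `[1, T]`. -/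
private lemma penrose_ftc
    (hAc : ContinuousOn A (Set.Ici 1)) (hhc : ContinuousOn h (Set.Ici 1))
    {T : ℝ} {y : ℝ → E} (hy1 : y 1 = 0)
    (hyd : ∀ t ∈ Icc (1:ℝ) T, HasDerivWithinAt y (A t (y t) + h t) (Icc (1:ℝ) T) t) :
    ∀ t ∈ Icc (1:ℝ) T, y t = ∫ s in (1:ℝ)..t, (A s (y s) + h s) := by
  intro t ht
  obtain ⟨ht1, htT⟩ := ht
  have hycont : ContinuousOn y (Icc 1 T) := fun s hs => (hyd s hs).continuousWithinAt
  have hwcont : ContinuousOn (fun s => A s (y s) + h s) (Icc (1:ℝ) T) :=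
    ((hAc.mono Icc_subset_Ici_self).clm_apply hycont).add (hhc.mono Icc_subset_Ici_self)
  have key := intervalIntegral.integral_eq_sub_of_hasDeriv_right_of_le ht1
    (hycont.mono (Icc_subset_Icc le_rfl htT))
    (fun x hx => by
      have hxT : x < T := lt_of_lt_of_le hx.2 htT
      exact (hasDerivWithinAt_Ici_of_Icc (le_of_lt hx.1) hxT
        (hyd x ⟨le_of_lt hx.1, le_of_lt hxT⟩)).mono Ioi_subset_Ici_self)
    (((hwcont.mono (Icc_subset_Icc le_rfl htT)).mono (by rw [Set.uIcc_of_le ht1])).intervalIntegrable)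
  rw [hy1, sub_zero] at key
  exact key.symm

/-- A priori Grönwall-type bound, uniform in the length of the interval. -/
private lemma penrose_apriori_bound (hC : 0 ≤ C) (hε₀ : 0 < ε₀)
    (hAc : ContinuousOn A (Set.Ici 1)) (hhc : ContinuousOn h (Set.Ici 1))
    (hA : ∀ l ≥ (1:ℝ), ‖A l‖ ≤ C * (l ^ 2)⁻¹)
    (hh : ∀ l ≥ (1:ℝ), ‖h l‖ ≤ C * l ^ (-1 - ε₀))
    {T : ℝ} (hT : 1 ≤ T) {y : ℝ → E} (hy1 : y 1 = 0)
    (hyd : ∀ t ∈ Icc (1:ℝ) T, HasDerivWithinAt y (A t (y t) + h t) (Icc (1:ℝ) T) t) :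
    ∀ t ∈ Icc (1:ℝ) T, ‖y t‖ ≤ C / ε₀ * Real.exp C := by
  have hycont : ContinuousOn y (Icc 1 T) := fun s hs => (hyd s hs).continuousWithinAt
  -- clamped version of `‖y‖`, continuous on all of `ℝ`
  set cl : ℝ → ℝ := fun s => max 1 (min s T) with hcl
  have hclcont : Continuous cl := continuous_const.max (continuous_id.min continuous_const)
  have hclmem : ∀ s, cl s ∈ Icc (1:ℝ) T := fun s =>
    ⟨le_max_left _ _, max_le hT (min_le_right _ _)⟩
  have hcleq : ∀ s ∈ Icc (1:ℝ) T, cl s = s := fun s hs => by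
    simp only [hcl, min_eq_left hs.2, max_eq_right hs.1]
  set u : ℝ → ℝ := fun s => ‖y (cl s)‖ with hu
  have hucont : Continuous u := by
    have h1 : ContinuousOn (fun s => y (cl s)) Set.univ :=
      hycont.comp hclcont.continuousOn (fun s _ => hclmem s)
    exact (continuousOn_univ.mp h1).norm
  set aA : ℝ → ℝ := fun s => C * ((max 1 s) ^ 2)⁻¹ * u s with haA
  have hmaxpos : ∀ s : ℝ, (0:ℝ) < (max 1 s) ^ 2 := fun s => by positivity
  have haAcont : Continuous aA :=
    (continuous_const.mul (((continuous_const.max continuous_id).pow 2).inv₀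
      fun s => ne_of_gt (hmaxpos s))).mul hucont
  set φ : ℝ → ℝ := fun r => C / ε₀ + ∫ s in (1:ℝ)..r, aA s with hφ
  have hφd : ∀ r : ℝ, HasDerivAt φ (aA r) r := fun r =>
    (intervalIntegral.integral_hasDerivAt_right (haAcont.intervalIntegrable _ _)
      (haAcont.stronglyMeasurableAtFilter _ _) haAcont.continuousAt).const_add _
  have hφcont : Continuous φ := by
    rw [continuous_iff_continuousAt]; exact fun r => (hφd r).continuousAt
  -- the integral inequality `‖y r‖ ≤ φ r`
  have hkey : ∀ r ∈ Icc (1:ℝ) T, ‖y r‖ ≤ φ r := by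
    intro r hr
    have h1r : (1:ℝ) ≤ r := hr.1
    have hICC : Icc (1:ℝ) r ⊆ Icc (1:ℝ) T := Icc_subset_Icc le_rfl hr.2
    have huIcc : Set.uIcc (1:ℝ) r = Icc (1:ℝ) r := Set.uIcc_of_le h1r
    have hwcont : ContinuousOn (fun s => A s (y s) + h s) (Icc (1:ℝ) T) :=
      ((hAc.mono Icc_subset_Ici_self).clm_apply hycont).add (hhc.mono Icc_subset_Ici_self)
    have hwint : IntervalIntegrable (fun s => ‖A s (y s) + h s‖) MeasureTheory.volume 1 r :=
      (((hwcont.mono hICC).norm).mono huIcc.subset).intervalIntegrable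
    have hrpowcont : ContinuousOn (fun s : ℝ => C * s ^ (-1 - ε₀)) (Icc (1:ℝ) r) :=
      continuousOn_const.mul (ContinuousOn.rpow_const continuousOn_id
        (fun x hx => Or.inl (ne_of_gt (lt_of_lt_of_le one_pos hx.1))))
    have hrpowint : IntervalIntegrable (fun s : ℝ => C * s ^ (-1 - ε₀))
        MeasureTheory.volume 1 r := (hrpowcont.mono huIcc.subset).intervalIntegrable
    have haAint : IntervalIntegrable aA MeasureTheory.volume 1 r :=
      haAcont.intervalIntegrable _ _
    have hptwise : ∀ s ∈ Icc (1:ℝ) r, ‖A s (y s) + h s‖ ≤ aA s + C * s ^ (-1 - ε₀) := by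
      intro s hs
      have hs1 : (1:ℝ) ≤ s := hs.1
      have hsT : s ∈ Icc (1:ℝ) T := hICC hs
      have h1 : ‖A s (y s) + h s‖ ≤ ‖A s‖ * ‖y s‖ + ‖h s‖ :=
        le_trans (norm_add_le _ _) (add_le_add_left ((A s).le_opNorm _) _)
      have h2 : ‖A s‖ * ‖y s‖ ≤ C * (s ^ 2)⁻¹ * ‖y s‖ :=
        mul_le_mul_of_nonneg_right (hA s hs1) (norm_nonneg _)
      have h3 : aA s = C * (s ^ 2)⁻¹ * ‖y s‖ := by
        simp only [haA, hu, max_eq_right hs1, hcleq s hsT]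
      calc ‖A s (y s) + h s‖ ≤ C * (s ^ 2)⁻¹ * ‖y s‖ + ‖h s‖ := le_trans h1 (by linarith)
        _ ≤ aA s + C * s ^ (-1 - ε₀) := by rw [h3]; exact add_le_add_right (hh s hs1) _
    have htail : (∫ s in (1:ℝ)..r, C * s ^ (-1 - ε₀)) ≤ C / ε₀ := by
      rw [intervalIntegral.integral_const_mul, integral_rpow
        (Or.inr ⟨by intro hcon; linarith,
          by rw [huIcc]; intro hmem; exact absurd hmem.1 (by norm_num)⟩)]
      have hre : (-1 : ℝ) - ε₀ + 1 = -ε₀ := by ring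
      rw [hre, Real.one_rpow]
      have hrnn : (0:ℝ) ≤ r ^ (-ε₀) := Real.rpow_nonneg (le_trans zero_le_one h1r) _
      have hd : (r ^ (-ε₀) - 1) / (-ε₀) ≤ 1 / ε₀ := by
        rw [div_le_iff_of_neg (by linarith : -ε₀ < 0)]
        have h0 : 1 / ε₀ * -ε₀ = -1 := by field_simp
        rw [h0]; linarith
      calc C * ((r ^ (-ε₀) - 1) / (-ε₀)) ≤ C * (1 / ε₀) := mul_le_mul_of_nonneg_left hd hC
        _ = C / ε₀ := by rw [mul_one_div]
    calc ‖y r‖ = ‖∫ s in (1:ℝ)..r, (A s (y s) + h s)‖ := by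
          rw [penrose_ftc hAc hhc hy1 hyd r hr]
      _ ≤ ∫ s in (1:ℝ)..r, ‖A s (y s) + h s‖ :=
          intervalIntegral.norm_integral_le_integral_norm h1r
      _ ≤ ∫ s in (1:ℝ)..r, (aA s + C * s ^ (-1 - ε₀)) :=
          intervalIntegral.integral_mono_on h1r hwint (haAint.add hrpowint) hptwise
      _ = (∫ s in (1:ℝ)..r, aA s) + ∫ s in (1:ℝ)..r, C * s ^ (-1 - ε₀) :=
          intervalIntegral.integral_add haAint hrpowint
      _ ≤ (∫ s in (1:ℝ)..r, aA s) + C / ε₀ := add_le_add_right htail _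
      _ = φ r := by rw [hφ]; ring
  -- the exponentially weighted function is antitone
  set ψ : ℝ → ℝ := fun r => φ r * Real.exp (C * r⁻¹ - C) with hψ
  have hψd : ∀ x ∈ Set.Ioo (1:ℝ) T, HasDerivAt ψ
      (aA x * Real.exp (C * x⁻¹ - C) +
        φ x * (Real.exp (C * x⁻¹ - C) * (C * -(x ^ 2)⁻¹))) x := by
    intro x hx
    have hx0 : x ≠ 0 := ne_of_gt (lt_trans one_pos hx.1)
    exact (hφd x).mul (((hasDerivAt_inv hx0).const_mul C).sub_const C).exp
  have hanti : AntitoneOn ψ (Icc 1 T) := by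
    apply antitoneOn_of_deriv_nonpos (convex_Icc 1 T)
    · exact hφcont.continuousOn.mul (Real.continuous_exp.comp_continuousOn
        ((continuousOn_const.mul (continuousOn_id.inv₀
          (fun x hx => ne_of_gt (lt_of_lt_of_le one_pos hx.1)))).sub continuousOn_const))
    · rw [interior_Icc]
      exact fun x hx => (hψd x hx).differentiableAt.differentiableWithinAt
    · rw [interior_Icc]
      intro x hx
      rw [(hψd x hx).deriv]
      have hx1 : (1:ℝ) ≤ x := le_of_lt hx.1
      have hxm : x ∈ Icc (1:ℝ) T := ⟨hx1, le_of_lt hx.2⟩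
      have hfac : aA x ≤ C * (x ^ 2)⁻¹ * φ x := by
        have h3 : aA x = C * (x ^ 2)⁻¹ * ‖y x‖ := by
          simp only [haA, hu, max_eq_right hx1, hcleq x hxm]
        rw [h3]
        exact mul_le_mul_of_nonneg_left (hkey x hxm) (by positivity)
      have he : (0:ℝ) < Real.exp (C * x⁻¹ - C) := Real.exp_pos _
      have hrw : aA x * Real.exp (C * x⁻¹ - C) +
          φ x * (Real.exp (C * x⁻¹ - C) * (C * -(x ^ 2)⁻¹))
          = Real.exp (C * x⁻¹ - C) * (aA x - C * (x ^ 2)⁻¹ * φ x) := by ring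
      rw [hrw]
      exact mul_nonpos_iff.mpr (Or.inl ⟨le_of_lt he, by linarith⟩)
  intro t ht
  have hψt : ψ t ≤ ψ 1 := hanti (left_mem_Icc.mpr hT) ht ht.1
  have hψ1 : ψ 1 = C / ε₀ := by
    simp only [hψ, hφ, inv_one, mul_one, sub_self, Real.exp_zero,
      intervalIntegral.integral_same, add_zero]
  have hφt : φ t = ψ t * Real.exp (C - C * t⁻¹) := by
    simp only [hψ]
    rw [mul_assoc, ← Real.exp_add, show C * t⁻¹ - C + (C - C * t⁻¹) = 0 by ring,
      Real.exp_zero, mul_one]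
  have hexp : Real.exp (C - C * t⁻¹) ≤ Real.exp C := by
    apply Real.exp_le_exp.mpr
    have h0 : 0 ≤ C * t⁻¹ := mul_nonneg hC (inv_nonneg.mpr (le_trans zero_le_one ht.1))
    linarith
  calc ‖y t‖ ≤ φ t := hkey t ht
    _ = ψ t * Real.exp (C - C * t⁻¹) := hφt
    _ ≤ (C / ε₀) * Real.exp (C - C * t⁻¹) := by
        apply mul_le_mul_of_nonneg_right _ (Real.exp_nonneg _)
        rw [← hψ1]; exact hψt
    _ ≤ C / ε₀ * Real.exp C := mul_le_mul_of_nonneg_left hexp (by positivity)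

/-- Local existence with a uniform time step, via Picard–Lindelöf. -/
private lemma penrose_local_step (hC : 0 ≤ C) (hε₀ : 0 < ε₀)
    (hAc : ContinuousOn A (Set.Ici 1)) (hhc : ContinuousOn h (Set.Ici 1))
    (hA : ∀ l ≥ (1:ℝ), ‖A l‖ ≤ C * (l ^ 2)⁻¹)
    (hh : ∀ l ≥ (1:ℝ), ‖h l‖ ≤ C * l ^ (-1 - ε₀))
    {a : ℝ} (ha : 1 ≤ a) {x₀ : E} (hx : ‖x₀‖ ≤ C / ε₀ * Real.exp C) :
    ∃ z : ℝ → E, z a = x₀ ∧ ∀ t ∈ Icc a (a + 1/(C * (C / ε₀ * Real.exp C + 1) + C + 1)),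
      HasDerivWithinAt z (A t (z t) + h t)
        (Icc a (a + 1/(C * (C / ε₀ * Real.exp C + 1) + C + 1))) t := by
  set M0 := C / ε₀ * Real.exp C with hM0
  set Cb := C * (M0 + 1) + C with hCb
  set δ := 1 / (Cb + 1) with hδ
  have hM0nn : 0 ≤ M0 := by positivity
  have hCbnn : 0 ≤ Cb := by
    have h1 := mul_nonneg hC (by linarith : (0:ℝ) ≤ M0 + 1)
    rw [hCb]; linarith
  have hδpos : 0 < δ := by rw [hδ]; positivity
  have hpl : IsPicardLindelof (fun t x => A t x + h t) (tmin := a) (tmax := a + δ)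
      ⟨a, le_rfl, by linarith⟩ x₀ 1 0 ⟨Cb, hCbnn⟩ C.toNNReal := by
    constructor
    · intro t ht
      have ht1 : (1:ℝ) ≤ t := le_trans ha ht.1
      have hb : ‖A t‖₊ ≤ C.toNNReal := by
        rw [← NNReal.coe_le_coe, coe_nnnorm, Real.coe_toNNReal C hC]
        calc ‖A t‖ ≤ C * (t ^ 2)⁻¹ := hA _ ht1
          _ ≤ C * 1 := by gcongr; rw [inv_le_one_iff₀]; right; nlinarith
          _ = C := mul_one C
      have hl := (A t).lipschitz.weaken hb
      have : LipschitzWith C.toNNReal (fun x : E => A t x + h t) := fun x y => by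
        simpa [edist_add_right] using hl x y
      exact this.lipschitzOnWith
    · intro x _
      have hsub : Icc a (a + δ) ⊆ Set.Ici (1:ℝ) := fun t ht => le_trans ha ht.1
      exact ((hAc.mono hsub).clm_apply continuousOn_const).add (hhc.mono hsub)
    · intro t ht x hx
      have ht1 : (1:ℝ) ≤ t := le_trans ha ht.1
      have hxn : ‖x‖ ≤ M0 + 1 := by
        have h1 : ‖x - x₀‖ ≤ 1 := by simpa using mem_closedBall_iff_norm.mp hx
        have h2 : ‖x‖ - ‖x₀‖ ≤ ‖x - x₀‖ := norm_sub_norm_le x x₀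
        linarith
      have hAt : ‖A t‖ ≤ C := by
        calc ‖A t‖ ≤ C * (t ^ 2)⁻¹ := hA _ ht1
          _ ≤ C * 1 := by gcongr; rw [inv_le_one_iff₀]; right; nlinarith
          _ = C := mul_one C
      have hht : ‖h t‖ ≤ C := by
        calc ‖h t‖ ≤ C * t ^ (-1 - ε₀) := hh t ht1
          _ ≤ C * 1 := mul_le_mul_of_nonneg_left
              (Real.rpow_le_one_of_one_le_of_nonpos ht1 (by linarith)) hC
          _ = C := mul_one C
      calc ‖A t x + h t‖ ≤ ‖A t‖ * ‖x‖ + ‖h t‖ :=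
            le_trans (norm_add_le _ _) (add_le_add_left ((A t).le_opNorm _) _)
        _ ≤ C * (M0 + 1) + C := by
            have := mul_le_mul hAt hxn (norm_nonneg x) hC
            linarith
        _ = Cb := hCb.symm
    · show Cb * max (a + δ - a) (a - a) ≤ 1 - 0
      rw [sub_zero]
      have hmax : max (a + δ - a) (a - a) = δ := by
        rw [add_sub_cancel_left, sub_self, max_eq_left hδpos.le]
      rw [hmax, hδ, mul_one_div, div_le_one (by linarith)]
      linarith
  obtain ⟨z, hz0, hzd⟩ := hpl.exists_eq_forall_mem_Icc_hasDerivWithinAt₀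
  exact ⟨z, hz0, hzd⟩

/-- Global existence of solutions on every interval `[1, 1 + n δ]`. -/
private lemma penrose_sol_exists (hC : 0 ≤ C) (hε₀ : 0 < ε₀)
    (hAc : ContinuousOn A (Set.Ici 1)) (hhc : ContinuousOn h (Set.Ici 1))
    (hA : ∀ l ≥ (1:ℝ), ‖A l‖ ≤ C * (l ^ 2)⁻¹)
    (hh : ∀ l ≥ (1:ℝ), ‖h l‖ ≤ C * l ^ (-1 - ε₀)) (n : ℕ) :
    ∃ y : ℝ → E, y 1 = 0 ∧
      ∀ t ∈ Icc (1:ℝ) (1 + n * (1/(C * (C / ε₀ * Real.exp C + 1) + C + 1))),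
        HasDerivWithinAt y (A t (y t) + h t)
          (Icc (1:ℝ) (1 + n * (1/(C * (C / ε₀ * Real.exp C + 1) + C + 1)))) t := by
  set M0 := C / ε₀ * Real.exp C with hM0
  set δ := 1 / (C * (M0 + 1) + C + 1) with hδ
  have hM0nn : 0 ≤ M0 := by positivity
  have hδpos : 0 < δ := by
    have h1 := mul_nonneg hC (by linarith : (0:ℝ) ≤ M0 + 1)
    rw [hδ]
    apply one_div_pos.mpr
    linarith
  induction n with
  | zero =>
    refine ⟨fun _ => 0, rfl, ?_⟩
    intro t ht
    rw [show (1:ℝ) + (0:ℕ) * δ = 1 by norm_num] at ht ⊢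
    rw [Icc_self] at ht ⊢
    rcases Set.mem_singleton_iff.mp ht with rfl
    have hbot : nhdsWithin (1:ℝ) ({(1:ℝ)} \ {(1:ℝ)}) = ⊥ := by
      rw [Set.diff_self, nhdsWithin_empty]
    show HasFDerivWithinAt (fun _ => (0:E))
      (ContinuousLinearMap.smulRight (1 : ℝ →L[ℝ] ℝ) (A 1 ((fun _ => (0:E)) 1) + h 1)) {(1:ℝ)} 1
    exact HasFDerivWithinAt.of_not_accPt (by rw [accPt_iff_clusterPt, inf_principal]; simp [ClusterPt])
  | succ n ih =>
    obtain ⟨y, hy1, hyd⟩ := ih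
    set Tn : ℝ := 1 + (n:ℝ) * δ with hTn
    have hTn1 : (1:ℝ) ≤ Tn := by
      rw [hTn]
      have := mul_nonneg (Nat.cast_nonneg n : (0:ℝ) ≤ n) hδpos.le
      linarith
    have hcast : (1:ℝ) + ((n:ℕ)+1 : ℕ) * δ = Tn + δ := by rw [hTn]; push_cast; ring
    have hbd : ‖y Tn‖ ≤ M0 :=
      penrose_apriori_bound hC hε₀ hAc hhc hA hh hTn1 hy1 hyd Tn (right_mem_Icc.mpr hTn1)
    obtain ⟨z, hz0, hzd⟩ := penrose_local_step hC hε₀ hAc hhc hA hh hTn1 hbd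
    rw [← hM0, ← hδ] at hzd
    set w : ℝ → E := fun t => if t ≤ Tn then y t else z t with hw
    have hwy : Set.EqOn w y (Icc 1 Tn) := fun t ht => if_pos ht.2
    have hwz : Set.EqOn w z (Icc Tn (Tn + δ)) := by
      intro t ht
      by_cases hc : t ≤ Tn
      · have htn : t = Tn := le_antisymm hc ht.1
        subst htn
        show (if Tn ≤ Tn then y Tn else z Tn) = z Tn
        rw [if_pos le_rfl]
        exact hz0.symm
      · exact if_neg hc
    refine ⟨w, ?_, ?_⟩
    · have : w 1 = y 1 := hwy ⟨le_rfl, hTn1⟩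
      rw [this, hy1]
    · intro t ht
      rw [hcast] at ht ⊢
      rcases lt_trichotomy t Tn with hlt | heq | hgt
      · have htm : t ∈ Icc (1:ℝ) Tn := ⟨ht.1, hlt.le⟩
        have h1 : HasDerivWithinAt w (A t (y t) + h t) (Icc 1 Tn) t :=
          (hyd t htm).congr (fun s hs => hwy hs) (hwy htm)
        rw [show w t = y t from hwy htm]
        refine h1.congr_set ?_
        filter_upwards [Iio_mem_nhds hlt] with s hs
        simp only [eq_iff_iff, Set.mem_Icc]
        exact ⟨fun hm => ⟨hm.1, by linarith [hm.2, hδpos.le]⟩, fun hm => ⟨hm.1, hs.le⟩⟩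
      · subst heq
        have htm : Tn ∈ Icc (1:ℝ) Tn := ⟨hTn1, le_rfl⟩
        have h1 : HasDerivWithinAt w (A Tn (y Tn) + h Tn) (Icc 1 Tn) Tn :=
          (hyd Tn htm).congr (fun s hs => hwy hs) (hwy htm)
        have htm2 : Tn ∈ Icc Tn (Tn + δ) := ⟨le_rfl, by linarith⟩
        have h2 : HasDerivWithinAt w (A Tn (z Tn) + h Tn) (Icc Tn (Tn + δ)) Tn :=
          (hzd Tn htm2).congr (fun s hs => hwz hs) (hwz htm2)
        rw [hz0] at h2
        have h3 := h1.union h2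
        rw [Set.Icc_union_Icc_eq_Icc hTn1 (by linarith : Tn ≤ Tn + δ)] at h3
        rw [show w Tn = y Tn from hwy htm]
        exact h3
      · have htm : t ∈ Icc Tn (Tn + δ) := ⟨hgt.le, ht.2⟩
        have h2 : HasDerivWithinAt w (A t (z t) + h t) (Icc Tn (Tn + δ)) t :=
          (hzd t htm).congr (fun s hs => hwz hs) (hwz htm)
        rw [show w t = z t from hwz htm]
        refine h2.congr_set ?_
        filter_upwards [Ioi_mem_nhds hgt] with s hs
        simp only [eq_iff_iff, Set.mem_Icc]
        exact ⟨fun hm => ⟨le_trans hTn1 hm.1, hm.2⟩, fun hm => ⟨hs.le, hm.2⟩⟩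

/-- Uniqueness of solutions of the linear ODE on `[1, T]`. -/
private lemma penrose_unique (hC : 0 ≤ C)
    (hA : ∀ l ≥ (1:ℝ), ‖A l‖ ≤ C * (l ^ 2)⁻¹)
    {T : ℝ} (hT : 1 ≤ T) {y z : ℝ → E} (h1 : y 1 = z 1)
    (hyd : ∀ t ∈ Icc (1:ℝ) T, HasDerivWithinAt y (A t (y t) + h t) (Icc (1:ℝ) T) t)
    (hzd : ∀ t ∈ Icc (1:ℝ) T, HasDerivWithinAt z (A t (z t) + h t) (Icc (1:ℝ) T) t) :
    Set.EqOn y z (Icc (1:ℝ) T) := by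
  have hv : ∀ t : ℝ, LipschitzOnWith C.toNNReal (fun x : E => A (max 1 t) x) Set.univ := by
    intro t
    have hm : (1:ℝ) ≤ max 1 t := le_max_left _ _
    have hb : ‖A (max 1 t)‖₊ ≤ C.toNNReal := by
      rw [← NNReal.coe_le_coe, coe_nnnorm, Real.coe_toNNReal C hC]
      calc ‖A (max 1 t)‖ ≤ C * ((max 1 t) ^ 2)⁻¹ := hA _ hm
        _ ≤ C * 1 := by
            gcongr
            rw [inv_le_one_iff₀]
            right
            nlinarith
        _ = C := mul_one C
    exact (((A (max 1 t)).lipschitz).weaken hb).lipschitzOnWith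
  intro t ht
  have key := ODE_solution_unique_of_mem_Icc_right (fun t _ => hv t)
    (f := fun s => y s - z s) (g := fun _ : ℝ => (0:E)) (a := 1) (b := T)
    (fun s hs => ((hyd s hs).sub (hzd s hs)).continuousWithinAt)
    (fun s hs => by
      have hsT : s < T := hs.2
      have hd := (hyd s ⟨hs.1, le_of_lt hsT⟩).sub (hzd s ⟨hs.1, le_of_lt hsT⟩)
      have hval : (A s (y s) + h s) - (A s (z s) + h s) = A (max 1 s) (y s - z s) := by
        rw [max_eq_right hs.1, map_sub]
        abel
      rw [hval] at hd
      exact hasDerivWithinAt_Ici_of_Icc hs.1 hsT hd)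
    (fun s _ => Set.mem_univ _)
    continuousOn_const
    (fun s hs => by
      rw [show A (max 1 s) ((fun _ : ℝ => (0:E)) s) = (0:E) from map_zero _]
      exact hasDerivWithinAt_const _ _ _)
    (fun s _ => Set.mem_univ _)
    (by simp [h1])
  have := key ht
  simpa [sub_eq_zero] using this

/-- Existence of a single bounded convergent profile for the inhomogeneity `h`. -/
private lemma penrose_profile (hC : 0 ≤ C) (hε₀ : 0 < ε₀) (hε₁ : ε₀ ≤ 1)
    (hAc : ContinuousOn A (Set.Ici 1)) (hhc : ContinuousOn h (Set.Ici 1))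
    (hA : ∀ l ≥ (1:ℝ), ‖A l‖ ≤ C * (l ^ 2)⁻¹)
    (hh : ∀ l ≥ (1:ℝ), ‖h l‖ ≤ C * l ^ (-1 - ε₀)) :
    ∃ b : ℝ → E, b 1 = 0 ∧
      (∀ l ≥ (1:ℝ), HasDerivWithinAt b (A l (b l) + h l) (Set.Ici 1) l) ∧
      (∀ l ≥ (1:ℝ), ‖b l‖ ≤ C / ε₀ * Real.exp C) ∧
      (∃ L : E, Tendsto b atTop (nhds L)) := by
  classical
  set M0 := C / ε₀ * Real.exp C with hM0
  set δ := 1 / (C * (M0 + 1) + C + 1) with hδ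
  have hM0nn : 0 ≤ M0 := by positivity
  have hδpos : 0 < δ := by
    have h1 := mul_nonneg hC (by linarith : (0:ℝ) ≤ M0 + 1)
    rw [hδ]
    apply one_div_pos.mpr
    linarith
  obtain ⟨sol, hsol1, hsold⟩ :
      ∃ sol : ℕ → ℝ → E, (∀ n : ℕ, sol n 1 = 0) ∧ ∀ n : ℕ, ∀ t ∈ Icc (1:ℝ) (1 + n * δ),
        HasDerivWithinAt (sol n) (A t (sol n t) + h t) (Icc (1:ℝ) (1 + n * δ)) t := by
    have hex := penrose_sol_exists hC hε₀ hAc hhc hA hh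
    choose sol h1 h2 using hex
    exact ⟨sol, h1, h2⟩
  have hTn1 : ∀ n : ℕ, (1:ℝ) ≤ 1 + n * δ := fun n => by
    have := mul_nonneg (Nat.cast_nonneg n : (0:ℝ) ≤ n) hδpos.le
    linarith
  -- agreement of the solutions on overlaps
  have hagree : ∀ m n : ℕ, m ≤ n → Set.EqOn (sol m) (sol n) (Icc 1 (1 + m * δ)) := by
    intro m n hmn
    have hsub : Icc (1:ℝ) (1 + m * δ) ⊆ Icc (1:ℝ) (1 + n * δ) := by
      apply Icc_subset_Icc le_rfl
      have : (m:ℝ) ≤ n := Nat.cast_le.mpr hmn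
      have := hδpos.le
      nlinarith
    exact penrose_unique hC hA (hTn1 m) (by rw [hsol1 m, hsol1 n]) (hsold m)
      (fun t ht => ((hsold n) t (hsub ht)).mono hsub)
  -- the glued solution
  set N : ℝ → ℕ := fun t => ⌈t / δ⌉₊ with hN
  set b : ℝ → E := fun t => sol (N t) t with hb
  have hmem : ∀ t : ℝ, 0 ≤ t → t ≤ 1 + N t * δ := by
    intro t ht0
    have h1 : t / δ ≤ (⌈t / δ⌉₊ : ℝ) := Nat.le_ceil _
    have h2 : t = t / δ * δ := by field_simp
    nlinarith [hδpos]
  have hbsol : ∀ (n : ℕ) (t : ℝ), 1 ≤ t → t ≤ 1 + n * δ → b t = sol n t := by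
    intro n t ht1 htn
    have htm : t ∈ Icc (1:ℝ) (1 + N t * δ) := ⟨ht1, hmem t (by linarith)⟩
    rcases le_total (N t) n with hc | hc
    · exact hagree (N t) n hc htm
    · exact (hagree n (N t) hc ⟨ht1, htn⟩).symm
  have hb1 : b 1 = 0 := hsol1 _
  have hbd : ∀ l ≥ (1:ℝ), HasDerivWithinAt b (A l (b l) + h l) (Set.Ici 1) l := by
    intro l hl
    set n := N (l + 1) with hn
    have hlT : l < 1 + n * δ := by
      have := hmem (l + 1) (by linarith)
      linarith
    have heq : Set.EqOn b (sol n) (Icc 1 (1 + n * δ)) := fun s hs => hbsol n s hs.1 hs.2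
    have h1 : HasDerivWithinAt b (A l (sol n l) + h l) (Icc 1 (1 + n * δ)) l :=
      (hsold n l ⟨hl, hlT.le⟩).congr (fun s hs => heq hs) (heq ⟨hl, hlT.le⟩)
    rw [show sol n l = b l from (heq ⟨hl, hlT.le⟩).symm] at h1
    exact hasDerivWithinAt_Ici_one_of_Icc hl hlT h1
  have hbbd : ∀ l ≥ (1:ℝ), ‖b l‖ ≤ M0 := by
    intro l hl
    have hlT : l ≤ 1 + N l * δ := hmem l (by linarith)
    rw [hbsol (N l) l hl hlT]
    exact penrose_apriori_bound hC hε₀ hAc hhc hA hh (hTn1 (N l)) (hsol1 (N l))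
      (hsold (N l)) l ⟨hl, hlT⟩
  -- convergence at infinity
  have hbcont : ContinuousOn b (Set.Ici 1) := fun s hs => (hbd s hs).continuousWithinAt
  set w : ℝ → E := fun s => A s (b s) + h s with hw
  have hwcont : ContinuousOn w (Set.Ici 1) := (hAc.clm_apply hbcont).add hhc
  have hwbound : ∀ s ≥ (1:ℝ), ‖w s‖ ≤ (C * M0 + C) * s ^ (-1 - ε₀) := by
    intro s hs
    have hs0 : (0:ℝ) ≤ s := by linarith
    have hrpow : (s ^ 2)⁻¹ ≤ s ^ (-1 - ε₀) := by
      have h2 : (s ^ 2)⁻¹ = s ^ (-2 : ℝ) := by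
        rw [← Real.rpow_natCast s 2, ← Real.rpow_neg hs0]
        norm_num
      rw [h2]
      exact Real.rpow_le_rpow_of_exponent_le hs (by linarith)
    have h1 : ‖A s (b s)‖ ≤ C * (s ^ 2)⁻¹ * M0 :=
      le_trans ((A s).le_opNorm _)
        (mul_le_mul (hA s hs) (hbbd s hs) (norm_nonneg _)
          (mul_nonneg hC (by positivity)))
    have h2 : C * (s ^ 2)⁻¹ * M0 ≤ C * M0 * s ^ (-1 - ε₀) := by
      rw [show C * (s ^ 2)⁻¹ * M0 = C * M0 * (s ^ 2)⁻¹ by ring]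
      exact mul_le_mul_of_nonneg_left hrpow (mul_nonneg hC hM0nn)
    have h3 : ‖h s‖ ≤ C * s ^ (-1 - ε₀) := hh s hs
    calc ‖w s‖ ≤ ‖A s (b s)‖ + ‖h s‖ := norm_add_le _ _
      _ ≤ C * M0 * s ^ (-1 - ε₀) + C * s ^ (-1 - ε₀) := add_le_add (le_trans h1 h2) h3
      _ = (C * M0 + C) * s ^ (-1 - ε₀) := by ring
  have hwint : MeasureTheory.IntegrableOn w (Set.Ioi 1) MeasureTheory.volume := by
    apply MeasureTheory.Integrable.mono'
      ((integrableOn_Ioi_rpow_of_lt (by linarith : (-1 - ε₀) < -1) one_pos).const_mul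
        (C * M0 + C))
    · exact (hwcont.mono Ioi_subset_Ici_self).aestronglyMeasurable measurableSet_Ioi
    · filter_upwards [MeasureTheory.ae_restrict_mem measurableSet_Ioi] with s hs
      exact hwbound s (le_of_lt hs)
  have hftc : ∀ t ≥ (1:ℝ), b t = ∫ s in (1:ℝ)..t, w s := by
    intro t ht
    exact penrose_ftc hAc hhc hb1
      (fun s hs => (hbd s hs.1).mono Icc_subset_Ici_self) t ⟨ht, le_rfl⟩
  refine ⟨b, hb1, hbd, hbbd, ⟨∫ s in Set.Ioi 1, w s, ?_⟩⟩
  have hlim := MeasureTheory.intervalIntegral_tendsto_integral_Ioi 1 hwint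
    (tendsto_id (α := ℝ))
  apply hlim.congr'
  filter_upwards [eventually_ge_atTop (1:ℝ)] with t ht
  exact (hftc t ht).symm

end PenroseAux

/-- ODE content of Lemma 4.2: linear splitting of solutions of the linearized
null structure equations into fixed bounded convergent profiles `b₁, b₂`
multiplied by the scalar functionals `F, G` of the deformation. -/
theorem penrose_linearized_splitting (ε C : ℝ) (hε : 0 < ε) (hC : 0 ≤ C) :
    ∃ M : ℝ, ∀ (E : Type) [NormedAddCommGroup E] [NormedSpace ℝ E] [FiniteDimensional ℝ E],
    ∀ (A : ℝ → E →L[ℝ] E) (f g : ℝ → E),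
      ContinuousOn A (Set.Ici 1) → ContinuousOn f (Set.Ici 1) →
      ContinuousOn g (Set.Ici 1) →
      (∀ l ≥ (1:ℝ), ‖A l‖ ≤ C * (l ^ 2)⁻¹) →
      (∀ l ≥ (1:ℝ), ‖f l‖ ≤ C * (l ^ 2)⁻¹) →
      (∀ l ≥ (1:ℝ), ‖g l‖ ≤ C * l ^ (-1 - ε)) →
      ∃ b₁ b₂ : ℝ → E,
        (∀ l ≥ (1:ℝ), ‖b₁ l‖ ≤ M ∧ ‖b₂ l‖ ≤ M) ∧
        (∃ L₁ : E, Tendsto b₁ atTop (nhds L₁)) ∧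
        (∃ L₂ : E, Tendsto b₂ atTop (nhds L₂)) ∧
        ∀ (F G : ℝ) (y : ℝ → E), y 1 = 0 →
          (∀ l ≥ (1:ℝ), HasDerivAt y (A l (y l) + F • f l + G • g l) l) →
          ∀ l ≥ (1:ℝ), y l = F • b₁ l + G • b₂ l := by
  refine ⟨C / min ε 1 * Real.exp C, ?_⟩
  intro E _ _ _ A f g hAc hfc hgc hA hf hg
  set ε₀ := min ε 1 with hε₀def
  have hε₀ : 0 < ε₀ := lt_min hε one_pos
  have hε₁ : ε₀ ≤ 1 := min_le_right _ _
  have hεε : ε₀ ≤ ε := min_le_left _ _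
  have hpow : ∀ l ≥ (1:ℝ), (l ^ 2)⁻¹ ≤ l ^ (-1 - ε₀) := by
    intro l hl
    have hl0 : (0:ℝ) ≤ l := by linarith
    have h2 : (l ^ 2)⁻¹ = l ^ (-2 : ℝ) := by
      rw [← Real.rpow_natCast l 2, ← Real.rpow_neg hl0]
      norm_num
    rw [h2]
    exact Real.rpow_le_rpow_of_exponent_le hl (by linarith)
  have hf' : ∀ l ≥ (1:ℝ), ‖f l‖ ≤ C * l ^ (-1 - ε₀) := fun l hl =>
    le_trans (hf l hl) (mul_le_mul_of_nonneg_left (hpow l hl) hC)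
  have hg' : ∀ l ≥ (1:ℝ), ‖g l‖ ≤ C * l ^ (-1 - ε₀) := by
    intro l hl
    refine le_trans (hg l hl) (mul_le_mul_of_nonneg_left ?_ hC)
    exact Real.rpow_le_rpow_of_exponent_le hl (by linarith)
  obtain ⟨b₁, hb₁0, hb₁d, hb₁bd, hb₁lim⟩ := penrose_profile hC hε₀ hε₁ hAc hfc hA hf'
  obtain ⟨b₂, hb₂0, hb₂d, hb₂bd, hb₂lim⟩ := penrose_profile hC hε₀ hε₁ hAc hgc hA hg'
  refine ⟨b₁, b₂, fun l hl => ⟨hb₁bd l hl, hb₂bd l hl⟩, hb₁lim, hb₂lim, ?_⟩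
  intro F G y hy0 hyd l hl
  have hzd : ∀ t ∈ Set.Icc (1:ℝ) l, HasDerivWithinAt (fun s => F • b₁ s + G • b₂ s)
      (A t ((fun s => F • b₁ s + G • b₂ s) t) + (F • f t + G • g t)) (Set.Icc (1:ℝ) l) t := by
    intro t ht
    have h1 := (((hb₁d t ht.1).const_smul F).add ((hb₂d t ht.1).const_smul G)).mono
      (Set.Icc_subset_Ici_self : Set.Icc (1:ℝ) l ⊆ Set.Ici 1)
    have hval : F • (A t (b₁ t) + f t) + G • (A t (b₂ t) + g t)
        = A t (F • b₁ t + G • b₂ t) + (F • f t + G • g t) := by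
      rw [map_add, map_smul, map_smul, smul_add, smul_add]
      abel
    rw [hval] at h1
    exact h1
  have hyd' : ∀ t ∈ Set.Icc (1:ℝ) l, HasDerivWithinAt y
      (A t (y t) + (F • f t + G • g t)) (Set.Icc (1:ℝ) l) t := by
    intro t ht
    have h1 := (hyd t ht.1).hasDerivWithinAt (s := Set.Icc (1:ℝ) l)
    rw [show A t (y t) + F • f t + G • g t = A t (y t) + (F • f t + G • g t) by abel] at h1
    exact h1
  have h1 : y 1 = F • b₁ 1 + G • b₂ 1 := by rw [hy0, hb₁0, hb₂0, smul_zero, smul_zero, add_zero]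
  exact penrose_unique hC hA hl h1 hyd' hzd ⟨hl, le_rfl⟩
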